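/- Fix η with 0 < η < 1 and weights w1, w2 with 0 < w1 < w2 and w1 + w2 = 1. Define D(r1,r2) as the infimum of w1·D1 + w2·D2 over (D1,D2) ∈ S(r1,r2). Then D is a real-valued convex function on [0,∞)² which is nonincreasing in each coordinate. -/

import Mathlib

/-- `d1min(r1,r2) = (η̄ + η·2^{−2r2})·2^{−2r1}`. -/
noncomputable def d1min (η r1 r2 : ℝ) : ℝ :=
  ((1 - η) + η * (2 : ℝ) ^ (-2 * r2)) * (2 : ℝ) ^ (-2 * r1)

/-- `d2min(r1,r2) = (η̄ + η·2^{−2r1})·2^{−2r2}`. -/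
noncomputable def d2min (η r1 r2 : ℝ) : ℝ :=
  ((1 - η) + η * (2 : ℝ) ^ (-2 * r1)) * (2 : ℝ) ^ (-2 * r2)

/-- `d12min(r1,r2) = (η̄ + η·2^{−2(r1+r2)})·2^{−2(r1+r2)}`. -/
noncomputable def d12min (η r1 r2 : ℝ) : ℝ :=
  ((1 - η) + η * (2 : ℝ) ^ (-2 * (r1 + r2))) * (2 : ℝ) ^ (-2 * (r1 + r2))

/-- The feasible distortion set `S(r1,r2)`. -/
noncomputable def distSet (η r1 r2 : ℝ) : Set (ℝ × ℝ) :=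
  {D | d1min η r1 r2 ≤ D.1 ∧ d2min η r1 r2 ≤ D.2 ∧ d12min η r1 r2 ≤ D.1 * D.2}


/-- The minimum weighted-sum distortion at coding rates `(r1,r2)`:
`D(r1,r2) = inf { w1·D1 + w2·D2 : (D1,D2) ∈ S(r1,r2) }`. -/
noncomputable def Dmin (η w1 w2 r1 r2 : ℝ) : ℝ :=
  sInf ((fun D : ℝ × ℝ => w1 * D.1 + w2 * D.2) '' distSet η r1 r2)

/-! ### Auxiliary machinery -/

/-- `uexp r = 2^{-2r}` written as an exponential. -/
noncomputable def uexp (r : ℝ) : ℝ := Real.exp (-(2 * Real.log 2) * r)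

lemma pow2_eq (r : ℝ) : (2 : ℝ) ^ (-2 * r) = uexp r := by
  rw [Real.rpow_def_of_pos (by norm_num), uexp]
  congr 1; ring

lemma uexp_pos (r : ℝ) : 0 < uexp r := Real.exp_pos _

lemma uexp_anti {r r' : ℝ} (h : r ≤ r') : uexp r' ≤ uexp r := by
  have hl : 0 < Real.log 2 := Real.log_pos (by norm_num)
  exact Real.exp_le_exp.2 (by nlinarith)

lemma uexp_comb {θ θ' x y : ℝ} (hθ : 0 ≤ θ) (hθ' : 0 ≤ θ') (hsum : θ + θ' = 1) :
    uexp (θ * x + θ' * y) ≤ θ * uexp x + θ' * uexp y := by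
  have h := convexOn_exp.2 (Set.mem_univ (-(2 * Real.log 2) * x))
    (Set.mem_univ (-(2 * Real.log 2) * y)) hθ hθ' hsum
  simp only [smul_eq_mul] at h
  have harg : -(2 * Real.log 2) * (θ * x + θ' * y)
      = θ * (-(2 * Real.log 2) * x) + θ' * (-(2 * Real.log 2) * y) := by ring
  rw [uexp, harg]
  exact h

lemma uexp_add (r s : ℝ) : uexp r * uexp s = uexp (r + s) := by
  rw [uexp, uexp, uexp, ← Real.exp_add]
  congr 1; ring

lemma d1min_eq (η r1 r2 : ℝ) :
    d1min η r1 r2 = (1 - η) * uexp r1 + η * uexp (r1 + r2) := by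
  rw [d1min, pow2_eq, pow2_eq, ← uexp_add]; ring

lemma d2min_eq (η r1 r2 : ℝ) :
    d2min η r1 r2 = (1 - η) * uexp r2 + η * uexp (r1 + r2) := by
  rw [d2min, pow2_eq, pow2_eq, ← uexp_add]; ring

lemma d12min_eq (η r1 r2 : ℝ) :
    d12min η r1 r2 = ((1 - η) + η * uexp (r1 + r2)) * uexp (r1 + r2) := by
  rw [d12min, pow2_eq]

section eta

variable {η : ℝ} (hη0 : 0 < η) (hη1 : η < 1)

include hη0 hη1

lemma base_pos (s : ℝ) : 0 < (1 - η) + η * uexp s :=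
  add_pos (by linarith) (mul_pos hη0 (uexp_pos s))

lemma d1min_pos (r1 r2 : ℝ) : 0 < d1min η r1 r2 := by
  rw [d1min_eq]
  have := uexp_pos r1; have := uexp_pos (r1 + r2)
  nlinarith

lemma d2min_pos (r1 r2 : ℝ) : 0 < d2min η r1 r2 := by
  rw [d2min_eq]
  have := uexp_pos r2; have := uexp_pos (r1 + r2)
  nlinarith

lemma d12min_pos (r1 r2 : ℝ) : 0 < d12min η r1 r2 := by
  rw [d12min_eq]
  exact mul_pos (base_pos hη0 hη1 _) (uexp_pos _)

end eta

/-- the log-concave-ish auxiliary function `m(s) = log(η̄ + η·2^{-2s})`. -/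
noncomputable def mfun (η s : ℝ) : ℝ := Real.log ((1 - η) + η * Real.exp (-(2 * Real.log 2) * s))

/-- `k(s) = log(d12min)` as a function of `s = r1+r2`. -/
noncomputable def kfun (η s : ℝ) : ℝ := -(2 * Real.log 2) * s + mfun η s

/-- `phi η s = sqrt(d12min)` as a function of `s = r1+r2`. -/
noncomputable def phi (η s : ℝ) : ℝ := Real.exp (kfun η s / 2)

section eta2

variable {η : ℝ} (hη0 : 0 < η) (hη1 : η < 1)

include hη0 hη1

lemma mfun_hasDerivAt (s : ℝ) :
    HasDerivAt (mfun η)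
      ((η * (Real.exp (-(2 * Real.log 2) * s) * (-(2 * Real.log 2) * 1)))
        / ((1 - η) + η * Real.exp (-(2 * Real.log 2) * s))) s := by
  have h1 : HasDerivAt (fun x : ℝ => -(2 * Real.log 2) * x) (-(2 * Real.log 2) * 1) s :=
    (hasDerivAt_id s).const_mul _
  have h2 := h1.exp
  have h3 := h2.const_mul η
  have h4 := h3.const_add (1 - η)
  have hpos : (0:ℝ) < (1 - η) + η * Real.exp (-(2 * Real.log 2) * s) := by
    have := base_pos hη0 hη1 s
    rwa [uexp] at this
  exact h4.log (ne_of_gt hpos)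

lemma mfun_deriv (s : ℝ) :
    deriv (mfun η) s = -(2 * Real.log 2) * (η * Real.exp (-(2 * Real.log 2) * s))
        / ((1 - η) + η * Real.exp (-(2 * Real.log 2) * s)) := by
  have h := (mfun_hasDerivAt hη0 hη1 s).deriv
  rw [h]; ring

lemma mfun_convex : ConvexOn ℝ Set.univ (mfun η) := by
  apply Monotone.convexOn_univ_of_deriv
  · exact fun s => (mfun_hasDerivAt hη0 hη1 s).differentiableAt
  · intro s t hst
    rw [mfun_deriv hη0 hη1, mfun_deriv hη0 hη1]
    have hl : 0 < Real.log 2 := Real.log_pos (by norm_num)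
    set u : ℝ := Real.exp (-(2 * Real.log 2) * t) with hu
    set U : ℝ := Real.exp (-(2 * Real.log 2) * s) with hU
    have hup : 0 < u := Real.exp_pos _
    have hUp : 0 < U := Real.exp_pos _
    have huU : u ≤ U := Real.exp_le_exp.2 (by nlinarith)
    have hd1 : 0 < (1 - η) + η * U := by nlinarith
    have hd2 : 0 < (1 - η) + η * u := by nlinarith
    rw [div_le_div_iff₀ hd1 hd2]
    have hc : (0:ℝ) < 2 * Real.log 2 * η * (1 - η) :=
      mul_pos (mul_pos (by linarith) hη0) (by linarith)
    nlinarith [mul_le_mul_of_nonneg_left huU hc.le]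

lemma kfun_convex : ConvexOn ℝ Set.univ (kfun η) := by
  have hlin : ConvexOn ℝ Set.univ (fun s : ℝ => -(2 * Real.log 2) * s) := by
    refine ⟨convex_univ, fun x _ y _ θ θ' hθ hθ' hsum => ?_⟩
    simp only [smul_eq_mul]
    exact le_of_eq (by ring)
  exact hlin.add (mfun_convex hη0 hη1)

lemma phi_comb {θ θ' x y : ℝ} (hθ : 0 ≤ θ) (hθ' : 0 ≤ θ') (hsum : θ + θ' = 1) :
    phi η (θ * x + θ' * y) ≤ θ * phi η x + θ' * phi η y := by
  have hk := (kfun_convex hη0 hη1).2 (Set.mem_univ x) (Set.mem_univ y) hθ hθ' hsum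
  simp only [smul_eq_mul] at hk
  calc phi η (θ * x + θ' * y) = Real.exp (kfun η (θ * x + θ' * y) / 2) := rfl
    _ ≤ Real.exp ((θ * kfun η x + θ' * kfun η y) / 2) :=
        Real.exp_le_exp.2 (by linarith)
    _ = Real.exp (θ * (kfun η x / 2) + θ' * (kfun η y / 2)) := by ring_nf
    _ ≤ θ * Real.exp (kfun η x / 2) + θ' * Real.exp (kfun η y / 2) := by
        have h := convexOn_exp.2 (Set.mem_univ (kfun η x / 2))
          (Set.mem_univ (kfun η y / 2)) hθ hθ' hsum
        simpa only [smul_eq_mul] using h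
    _ = θ * phi η x + θ' * phi η y := rfl

lemma phi_sq (s : ℝ) : phi η s ^ 2 = ((1 - η) + η * uexp s) * uexp s := by
  have hpos : (0:ℝ) < (1 - η) + η * Real.exp (-(2 * Real.log 2) * s) := by
    have := base_pos hη0 hη1 s; rwa [uexp] at this
  have h1 : phi η s ^ 2 = Real.exp (kfun η s) := by
    rw [phi, sq, ← Real.exp_add, add_halves]
  rw [h1, kfun, mfun, Real.exp_add, Real.exp_log hpos]
  simp only [uexp]; ring

end eta2

lemma phi_nonneg (η s : ℝ) : 0 ≤ phi η s := (Real.exp_pos _).le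

section main

variable {η w1 w2 : ℝ} (hη0 : 0 < η) (hη1 : η < 1)
  (hw0 : 0 < w1) (hw12 : w1 < w2)

include hη0 hη1 in
/-- Key combination lemma: a convex combination of feasible points at rates `p`, `q`
is feasible at the convex combination of the rates. -/
lemma comb_mem (p q D D' : ℝ × ℝ)
    (hD : D ∈ distSet η p.1 p.2) (hD' : D' ∈ distSet η q.1 q.2)
    {θ θ' : ℝ} (hθ : 0 ≤ θ) (hθ' : 0 ≤ θ') (hsum : θ + θ' = 1) :
    (θ * D.1 + θ' * D'.1, θ * D.2 + θ' * D'.2)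
      ∈ distSet η (θ * p.1 + θ' * q.1) (θ * p.2 + θ' * q.2) := by
  obtain ⟨h1, h2, h3⟩ := hD
  obtain ⟨h1', h2', h3'⟩ := hD'
  have hD1 : 0 < D.1 := lt_of_lt_of_le (d1min_pos hη0 hη1 _ _) h1
  have hD2 : 0 < D.2 := lt_of_lt_of_le (d2min_pos hη0 hη1 _ _) h2
  have hD1' : 0 < D'.1 := lt_of_lt_of_le (d1min_pos hη0 hη1 _ _) h1'
  have hD2' : 0 < D'.2 := lt_of_lt_of_le (d2min_pos hη0 hη1 _ _) h2'
  have harg : (θ * p.1 + θ' * q.1) + (θ * p.2 + θ' * q.2)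
      = θ * (p.1 + p.2) + θ' * (q.1 + q.2) := by ring
  refine ⟨?_, ?_, ?_⟩
  · -- first marginal constraint
    rw [d1min_eq] at h1 h1' ⊢
    rw [harg]
    have e1 := uexp_comb hθ hθ' hsum (x := p.1) (y := q.1)
    have e2 := uexp_comb hθ hθ' hsum (x := p.1 + p.2) (y := q.1 + q.2)
    show (1 - η) * uexp (θ * p.1 + θ' * q.1)
        + η * uexp (θ * (p.1 + p.2) + θ' * (q.1 + q.2)) ≤ θ * D.1 + θ' * D'.1
    nlinarith [mul_le_mul_of_nonneg_left e1 (by linarith : (0:ℝ) ≤ 1 - η),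
      mul_le_mul_of_nonneg_left e2 hη0.le,
      mul_le_mul_of_nonneg_left h1 hθ, mul_le_mul_of_nonneg_left h1' hθ']
  · -- second marginal constraint
    rw [d2min_eq] at h2 h2' ⊢
    rw [harg]
    have e1 := uexp_comb hθ hθ' hsum (x := p.2) (y := q.2)
    have e2 := uexp_comb hθ hθ' hsum (x := p.1 + p.2) (y := q.1 + q.2)
    show (1 - η) * uexp (θ * p.2 + θ' * q.2)
        + η * uexp (θ * (p.1 + p.2) + θ' * (q.1 + q.2)) ≤ θ * D.2 + θ' * D'.2
    nlinarith [mul_le_mul_of_nonneg_left e1 (by linarith : (0:ℝ) ≤ 1 - η),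
      mul_le_mul_of_nonneg_left e2 hη0.le,
      mul_le_mul_of_nonneg_left h2 hθ, mul_le_mul_of_nonneg_left h2' hθ']
  · -- product constraint
    rw [d12min_eq, ← phi_sq hη0 hη1] at h3 h3' ⊢
    rw [harg]
    set s := p.1 + p.2
    set t := q.1 + q.2
    have hphi := phi_comb hη0 hη1 hθ hθ' hsum (x := s) (y := t)
    have hs0 := phi_nonneg η s
    have ht0 := phi_nonneg η t
    have step1 : phi η (θ * s + θ' * t) ^ 2 ≤ (θ * phi η s + θ' * phi η t) ^ 2 :=
      pow_le_pow_left₀ (phi_nonneg η _) hphi 2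
    refine le_trans step1 ?_
    show (θ * phi η s + θ' * phi η t) ^ 2 ≤ (θ * D.1 + θ' * D'.1) * (θ * D.2 + θ' * D'.2)
    obtain ⟨A, hA0, hA⟩ : ∃ A : ℝ, 0 ≤ A ∧ A ^ 2 = D.1 * D'.2 :=
      ⟨Real.sqrt (D.1 * D'.2), Real.sqrt_nonneg _, Real.sq_sqrt (by positivity)⟩
    obtain ⟨B, hB0, hB⟩ : ∃ B : ℝ, 0 ≤ B ∧ B ^ 2 = D'.1 * D.2 :=
      ⟨Real.sqrt (D'.1 * D.2), Real.sqrt_nonneg _, Real.sq_sqrt (by positivity)⟩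
    have hABsq : (phi η s * phi η t) ^ 2 ≤ (A * B) ^ 2 := by
      have hm : phi η s ^ 2 * phi η t ^ 2 ≤ (D.1 * D.2) * (D'.1 * D'.2) :=
        mul_le_mul h3 h3' (sq_nonneg _) (by positivity)
      calc (phi η s * phi η t) ^ 2 = phi η s ^ 2 * phi η t ^ 2 := by ring
        _ ≤ (D.1 * D.2) * (D'.1 * D'.2) := hm
        _ = (D.1 * D'.2) * (D'.1 * D.2) := by ring
        _ = (A * B) ^ 2 := by rw [mul_pow, hA, hB]
    have hAB : phi η s * phi η t ≤ A * B :=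
      (pow_le_pow_iff_left₀ (mul_nonneg hs0 ht0) (mul_nonneg hA0 hB0) two_ne_zero).1 hABsq
    have hcross : 0 ≤ D.1 * D'.2 + D'.1 * D.2 - 2 * (phi η s * phi η t) := by
      nlinarith [sq_nonneg (A - B), hAB, hA, hB]
    have key : (θ * phi η s + θ' * phi η t) ^ 2
        + (θ * θ * (D.1 * D.2 - phi η s ^ 2) + θ' * θ' * (D'.1 * D'.2 - phi η t ^ 2)
          + θ * θ' * (D.1 * D'.2 + D'.1 * D.2 - 2 * (phi η s * phi η t)))
        = (θ * D.1 + θ' * D'.1) * (θ * D.2 + θ' * D'.2) := by ring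
    linarith [mul_nonneg (mul_nonneg hθ hθ) (sub_nonneg.2 h3),
      mul_nonneg (mul_nonneg hθ' hθ') (sub_nonneg.2 h3'),
      mul_nonneg (mul_nonneg hθ hθ') hcross, key]

include hη0 hη1 in
lemma distSet_nonempty (r1 r2 : ℝ) : (distSet η r1 r2).Nonempty := by
  have hb : 0 < d2min η r1 r2 := d2min_pos hη0 hη1 r1 r2
  refine ⟨(max (d1min η r1 r2) (d12min η r1 r2 / d2min η r1 r2), d2min η r1 r2),
    le_max_left _ _, le_refl _, ?_⟩
  have h1 : d12min η r1 r2 / d2min η r1 r2 * d2min η r1 r2 = d12min η r1 r2 :=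
    div_mul_cancel₀ _ (ne_of_gt hb)
  calc d12min η r1 r2 = d12min η r1 r2 / d2min η r1 r2 * d2min η r1 r2 := h1.symm
    _ ≤ max (d1min η r1 r2) (d12min η r1 r2 / d2min η r1 r2) * d2min η r1 r2 :=
        mul_le_mul_of_nonneg_right (le_max_right _ _) hb.le

include hη0 hη1 hw0 hw12 in
lemma image_bddBelow (r1 r2 : ℝ) :
    BddBelow ((fun D : ℝ × ℝ => w1 * D.1 + w2 * D.2) '' distSet η r1 r2) := by
  refine ⟨0, ?_⟩
  rintro v ⟨D, ⟨h1, h2, -⟩, rfl⟩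
  have hD1 : 0 < D.1 := lt_of_lt_of_le (d1min_pos hη0 hη1 _ _) h1
  have hD2 : 0 < D.2 := lt_of_lt_of_le (d2min_pos hη0 hη1 _ _) h2
  have hw2 : 0 < w2 := lt_trans hw0 hw12
  positivity

include hη0 hη1 hw0 hw12 in
lemma Dmin_le_of_subset {r1 r2 r1' r2' : ℝ}
    (hsub : distSet η r1 r2 ⊆ distSet η r1' r2') :
    Dmin η w1 w2 r1' r2' ≤ Dmin η w1 w2 r1 r2 :=
  csInf_le_csInf (image_bddBelow hη0 hη1 hw0 hw12 r1' r2')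
    ((distSet_nonempty hη0 hη1 r1 r2).image _) (Set.image_mono hsub)

end main

theorem Dmin_convex_antitone (η w1 w2 : ℝ) (hη0 : 0 < η) (hη1 : η < 1)
    (hw0 : 0 < w1) (hw12 : w1 < w2) (hwsum : w1 + w2 = 1) :
    ConvexOn ℝ (Set.Ici (0 : ℝ) ×ˢ Set.Ici (0 : ℝ))
      (fun p : ℝ × ℝ => Dmin η w1 w2 p.1 p.2) ∧
    (∀ r1 r1' r2 : ℝ, 0 ≤ r1 → r1 ≤ r1' → 0 ≤ r2 →
      Dmin η w1 w2 r1' r2 ≤ Dmin η w1 w2 r1 r2) ∧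
    (∀ r1 r2 r2' : ℝ, 0 ≤ r1 → 0 ≤ r2 → r2 ≤ r2' →
      Dmin η w1 w2 r1 r2' ≤ Dmin η w1 w2 r1 r2) := by
  have hw2 : 0 < w2 := lt_trans hw0 hw12
  refine ⟨⟨(convex_Ici (0:ℝ)).prod (convex_Ici (0:ℝ)), ?_⟩, ?_, ?_⟩
  · intro p hp q hq θ θ' hθ hθ' hsum
    simp only [smul_eq_mul, Prod.fst_add, Prod.snd_add, Prod.smul_fst, Prod.smul_snd]
    refine le_of_forall_pos_le_add fun ε hε => ?_
    obtain ⟨v, hvmem, hvlt⟩ := Real.lt_sInf_add_pos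
      ((distSet_nonempty hη0 hη1 p.1 p.2).image (fun D : ℝ × ℝ => w1 * D.1 + w2 * D.2)) hε
    obtain ⟨v', hvmem', hvlt'⟩ := Real.lt_sInf_add_pos
      ((distSet_nonempty hη0 hη1 q.1 q.2).image (fun D : ℝ × ℝ => w1 * D.1 + w2 * D.2)) hε
    obtain ⟨D, hD, hDv⟩ := hvmem
    obtain ⟨D', hD', hDv'⟩ := hvmem'
    rw [← hDv] at hvlt
    rw [← hDv'] at hvlt'
    simp only [] at hvlt hvlt'
    have hmem := comb_mem (η := η) hη0 hη1 p q D D' hD hD' hθ hθ' hsum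
    have hle : Dmin η w1 w2 (θ * p.1 + θ' * q.1) (θ * p.2 + θ' * q.2)
        ≤ w1 * (θ * D.1 + θ' * D'.1) + w2 * (θ * D.2 + θ' * D'.2) :=
      csInf_le (image_bddBelow hη0 hη1 hw0 hw12 _ _) ⟨_, hmem, rfl⟩
    have hvlt1 : θ * (w1 * D.1 + w2 * D.2) ≤ θ * (Dmin η w1 w2 p.1 p.2 + ε) :=
      mul_le_mul_of_nonneg_left hvlt.le hθ
    have hvlt2 : θ' * (w1 * D'.1 + w2 * D'.2) ≤ θ' * (Dmin η w1 w2 q.1 q.2 + ε) :=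
      mul_le_mul_of_nonneg_left hvlt'.le hθ'
    nlinarith [hle, hvlt1, hvlt2]
  · intro r1 r1' r2 _ h _
    refine Dmin_le_of_subset hη0 hη1 hw0 hw12 ?_
    rintro D ⟨h1, h2, h3⟩
    have ha := uexp_anti h
    have hb := uexp_anti (add_le_add_left h r2)
    have h1e : 0 < η := hη0
    refine ⟨?_, ?_, ?_⟩
    · rw [d1min_eq] at h1 ⊢
      nlinarith [mul_le_mul_of_nonneg_left ha (by linarith : (0:ℝ) ≤ 1 - η),
        mul_le_mul_of_nonneg_left hb hη0.le]
    · rw [d2min_eq] at h2 ⊢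
      nlinarith [mul_le_mul_of_nonneg_left hb hη0.le]
    · rw [d12min_eq] at h3 ⊢
      have hu1 := uexp_pos (r1 + r2)
      have hu2 := uexp_pos (r1' + r2)
      nlinarith [hb, mul_le_mul hb hb hu2.le hu1.le]
  · intro r1 r2 r2' _ _ h
    refine Dmin_le_of_subset hη0 hη1 hw0 hw12 ?_
    rintro D ⟨h1, h2, h3⟩
    have ha := uexp_anti h
    have hb := uexp_anti (add_le_add_right h r1)
    refine ⟨?_, ?_, ?_⟩
    · rw [d1min_eq] at h1 ⊢
      nlinarith [mul_le_mul_of_nonneg_left hb hη0.le]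
    · rw [d2min_eq] at h2 ⊢
      nlinarith [mul_le_mul_of_nonneg_left ha (by linarith : (0:ℝ) ≤ 1 - η),
        mul_le_mul_of_nonneg_left hb hη0.le]
    · rw [d12min_eq] at h3 ⊢
      have hu1 := uexp_pos (r1 + r2)
      have hu2 := uexp_pos (r1 + r2')
      nlinarith [hb, mul_le_mul hb hb hu2.le hu1.le]
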